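/- (Local existence and uniqueness for fractional ODEs.) Let 0 < γ < 1, v₀ ∈ ℝ, T > 0, A > 0, and let f be continuous on D = [0, T] × [v₀ − A, v₀ + A] with sup_{0≤t≤T} |f(t, v₁) − f(t, v₂)| ≤ L |v₁ − v₂| for all v₁, v₂ ∈ [v₀ − A, v₀ + A], for some L > 0. Set M = sup_{(t,v) ∈ D} |f(t, v)| and T₁ = min{ T, sup{ t ≥ 0 : (M/Γ(1+γ)) t^γ E_γ(L t^γ) ≤ A } }. Then T₁ > 0 and there exists a unique continuous function v : [0, T₁] → [v₀ − A, v₀ + A] satisfying v(t) = v₀ + (1/Γ(γ)) ∫_0^t (t−s)^{γ−1} f(s, v(s)) ds for all t ∈ [0, T₁]. -/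

import Mathlib

open MeasureTheory Set
open scoped ENNReal Classical

/-- The Mittag-Leffler function `E_γ(z) = Σ_{n=0}^∞ z^n / Γ(γ n + 1)`. -/
noncomputable def mittagLeffler (γ z : ℝ) : ℝ :=
  ∑' n : ℕ, z ^ n / Real.Gamma (γ * n + 1)

namespace FodeAux


lemma fact_ge_pow (m : ℕ) : ∀ k, m ≤ k → m ^ (k - m) ≤ Nat.factorial k := by
  intro k hk
  induction k with
  | zero => simpa using Nat.one_le_iff_ne_zero.mpr (Nat.factorial_ne_zero 0)
  | succ k ih =>
    rcases Nat.eq_or_lt_of_le hk with h | h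
    · simp only [← h, Nat.sub_self, pow_zero]
      exact Nat.one_le_iff_ne_zero.mpr (Nat.factorial_ne_zero _)
    · have hk' : m ≤ k := Nat.lt_succ_iff.mp h
      have e : m ^ (k + 1 - m) = m ^ (k - m) * m := by
        rw [← pow_succ, Nat.succ_sub hk']
      rw [e, Nat.factorial_succ]
      calc m ^ (k - m) * m ≤ Nat.factorial k * (k+1) := Nat.mul_le_mul (ih hk') (by omega)
        _ = (k+1) * Nat.factorial k := Nat.mul_comm _ _

lemma Gamma_mono (a b : ℝ) (ha : 2 ≤ a) (hab : a ≤ b) : Real.Gamma a ≤ Real.Gamma b := by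
  rcases eq_or_lt_of_le hab with h | h
  · rw [h]
  · exact (Real.Gamma_strictMonoOn_Ici ha (le_trans ha hab) h).le

lemma summable_ml (γ : ℝ) (hγ : 0 < γ) (x : ℝ) (hx : 0 ≤ x) :
    Summable (fun n : ℕ => x ^ n / Real.Gamma (γ * n + 1)) := by
  obtain ⟨m, hm⟩ := exists_nat_ge (max 1 ((x+1) ^ γ⁻¹))
  have hm1 : (1:ℝ) ≤ m := le_trans (le_max_left _ _) hm
  have hm1' : 1 ≤ m := by exact_mod_cast hm1
  have hmγ : x + 1 ≤ (m:ℝ) ^ γ := by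
    calc x + 1 = ((x+1) ^ γ⁻¹) ^ γ := (Real.rpow_inv_rpow (by linarith) hγ.ne').symm
      _ ≤ (m:ℝ) ^ γ :=
        Real.rpow_le_rpow (Real.rpow_nonneg (by linarith) _) (le_trans (le_max_right _ _) hm) hγ.le
  have hmγpos : (0:ℝ) < (m:ℝ) ^ γ := by linarith
  set r : ℝ := x / (m:ℝ) ^ γ with hr
  have hr0 : 0 ≤ r := div_nonneg hx hmγpos.le
  have hr1 : r < 1 := by rw [hr, div_lt_one hmγpos]; linarith
  obtain ⟨N, hN⟩ := exists_nat_ge ((m + 3)/γ)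
  have hγN : (m:ℝ) + 3 ≤ γ * N := by
    rw [div_le_iff₀ hγ] at hN; linarith [hN]
  rw [← summable_nat_add_iff N]
  have hmaj : Summable (fun n : ℕ => ((m:ℝ) ^ (m+1) * r ^ N) * r ^ n) :=
    (summable_geometric_of_lt_one hr0 hr1).mul_left _
  apply hmaj.of_nonneg_of_le
  · intro n
    have := Real.Gamma_pos_of_pos (show (0:ℝ) < γ * (n+N : ℕ) + 1 by positivity)
    positivity
  intro n
  set k : ℕ := n + N with hkdef
  have hkN : (N:ℝ) ≤ (k:ℝ) := by exact_mod_cast Nat.le_add_left N n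
  have hk : (m:ℝ) + 3 ≤ γ * k := le_trans hγN (by nlinarith [hγ.le])
  have hγk0 : (0:ℝ) ≤ γ * k := by nlinarith
  set j : ℕ := ⌊γ * (k:ℕ)⌋₊ with hj
  have hjm : m ≤ j := by apply Nat.le_floor; nlinarith
  have hj1 : (1:ℝ) ≤ (j:ℝ) := by exact_mod_cast le_trans hm1' hjm
  -- Gamma lower bound by factorial
  have h1 : (Nat.factorial j : ℝ) ≤ Real.Gamma (γ * k + 1) := by
    have h2 : Real.Gamma ((j:ℝ) + 1) ≤ Real.Gamma (γ * k + 1) := by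
      apply Gamma_mono _ _ (by linarith)
      have := Nat.floor_le hγk0
      linarith [this]
    rwa [Real.Gamma_nat_eq_factorial] at h2
  have h2 : ((m:ℝ)) ^ (j - m) ≤ (Nat.factorial j : ℝ) := by
    exact_mod_cast fact_ge_pow m j hjm
  have hmne : (m:ℝ) ≠ 0 := by linarith
  have h3 : ((m:ℝ)) ^ (j - m) = (m:ℝ) ^ (j:ℕ) / (m:ℝ) ^ (m:ℕ) := by
    rw [pow_sub₀ _ hmne hjm, div_eq_mul_inv]
  have h4 : ((m:ℝ) ^ γ) ^ (k:ℕ) / (m:ℝ) ≤ (m:ℝ) ^ (j:ℕ) := by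
    have e1 : (m:ℝ) ^ (j:ℕ) = (m:ℝ) ^ ((j:ℕ):ℝ) := by rw [Real.rpow_natCast]
    have e2 : ((m:ℝ) ^ γ) ^ (k:ℕ) / (m:ℝ) = (m:ℝ) ^ (γ * k - 1) := by
      rw [Real.rpow_sub (by linarith), Real.rpow_one, ← Real.rpow_natCast ((m:ℝ)^γ) k,
        ← Real.rpow_mul (by linarith)]
    rw [e1, e2]
    apply Real.rpow_le_rpow_of_exponent_le hm1
    have := Nat.lt_floor_add_one (γ * (k:ℕ))
    linarith [this]
  have hlow : ((m:ℝ)^γ)^(k:ℕ) / (m:ℝ)^(m+1) ≤ Real.Gamma (γ * k + 1) := by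
    have e : ((m:ℝ)^γ)^(k:ℕ) / (m:ℝ)^(m+1) = (((m:ℝ)^γ)^(k:ℕ) / (m:ℝ)) / (m:ℝ)^(m:ℕ) := by
      rw [pow_succ]; ring
    rw [e]
    refine le_trans ?_ (le_trans h2 h1)
    rw [h3]
    apply div_le_div_of_nonneg_right h4 (by positivity)
  have hlowpos : (0:ℝ) < ((m:ℝ)^γ)^(k:ℕ) / (m:ℝ)^(m+1) := by positivity
  have hcast : γ * ((n:ℝ) + (N:ℝ)) + 1 = γ * (k:ℝ) + 1 := by push_cast [hkdef]; ring
  calc x ^ k / Real.Gamma (γ * ↑k + 1)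
      ≤ x ^ k / (((m:ℝ)^γ)^(k:ℕ) / (m:ℝ)^(m+1)) :=
        div_le_div_of_nonneg_left (pow_nonneg hx k) hlowpos hlow
    _ = ((m:ℝ) ^ (m+1)) * r ^ k := by
        rw [hr, div_pow]
        field_simp
    _ = ((m:ℝ) ^ (m+1) * r ^ N) * r ^ n := by rw [hkdef, pow_add]; ring



lemma term_nonneg (γ : ℝ) (hγ : 0 < γ) (x : ℝ) (hx : 0 ≤ x) (n : ℕ) :
    0 ≤ x ^ n / Real.Gamma (γ * n + 1) := by
  have h : (0:ℝ) < γ * n + 1 := by positivity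
  have := Real.Gamma_pos_of_pos h
  positivity

lemma one_le_ml (γ : ℝ) (hγ : 0 < γ) (z : ℝ) (hz : 0 ≤ z) : 1 ≤ mittagLeffler γ z := by
  have h := Summable.le_tsum (summable_ml γ hγ z hz) 0 (fun j _ => term_nonneg γ hγ z hz j)
  simpa [mittagLeffler, Real.Gamma_one] using h

lemma ml_mono (γ : ℝ) (hγ : 0 < γ) {z w : ℝ} (hz : 0 ≤ z) (hzw : z ≤ w) :
    mittagLeffler γ z ≤ mittagLeffler γ w := by
  refine Summable.tsum_le_tsum (fun n => ?_) (summable_ml γ hγ z hz) (summable_ml γ hγ w (le_trans hz hzw))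
  have h : (0:ℝ) < Real.Gamma (γ * n + 1) := Real.Gamma_pos_of_pos (by positivity)
  have h2 : z ^ n ≤ w ^ n := pow_le_pow_left₀ hz hzw n
  gcongr

lemma integrable_kernel_mul {γ : ℝ} (hγ0 : 0 < γ) (hγ1 : γ < 1) {t : ℝ} (ht : 0 ≤ t)
    {g : ℝ → ℝ} (hg : ContinuousOn g (Icc 0 t)) :
    IntervalIntegrable (fun s => (t - s) ^ (γ - 1) * g s) volume 0 t := by
  obtain ⟨C, hC⟩ := (isCompact_Icc).exists_bound_of_continuousOn hg
  have hC0 : 0 ≤ C := le_trans (norm_nonneg _) (hC 0 (by constructor <;> linarith))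
  have hker : IntervalIntegrable (fun s : ℝ => (t - s) ^ (γ - 1)) volume 0 t := by
    have h1 : IntervalIntegrable (fun x : ℝ => x ^ (γ - 1)) volume 0 t :=
      intervalIntegral.intervalIntegrable_rpow' (by linarith)
    have h2 := h1.comp_sub_left t
    simpa using h2.symm
  have hdom : IntervalIntegrable (fun s : ℝ => C * (t - s) ^ (γ - 1)) volume 0 t :=
    hker.const_mul C
  apply hdom.mono_fun
  · -- AEStronglyMeasurable on Ι 0 t
    have hcont : ContinuousOn (fun s => (t - s) ^ (γ - 1) * g s) (Ico 0 t) := by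
      apply ContinuousOn.mul
      · apply ContinuousOn.rpow_const
        · exact (continuous_const.sub continuous_id).continuousOn
        · intro x hx
          left
          have : x < t := hx.2
          intro h0
          have : t - x = 0 := h0
          linarith
      · exact hg.mono Ico_subset_Icc_self
    have h := (hcont.aestronglyMeasurable measurableSet_Ico).mono_measure
      (Measure.restrict_mono (μ := volume) Ioo_subset_Ico_self le_rfl)
    rw [Measure.restrict_congr_set Ioo_ae_eq_Ioc] at h
    rwa [uIoc_of_le ht]
  · rw [uIoc_of_le ht]
    rw [Filter.EventuallyLE, ae_restrict_iff' measurableSet_Ioc]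
    apply Filter.Eventually.of_forall
    intro s hs
    have h1 : 0 ≤ t - s := by linarith [hs.2]
    have h2 : (0:ℝ) ≤ (t - s) ^ (γ - 1) := Real.rpow_nonneg h1 _
    have h3 : |g s| ≤ C := by
      simpa [Real.norm_eq_abs] using hC s ⟨hs.1.le, hs.2⟩
    simp only [Real.norm_eq_abs]
    rw [abs_mul, abs_mul, abs_of_nonneg h2, abs_of_nonneg hC0]
    calc (t - s) ^ (γ - 1) * |g s| ≤ (t - s) ^ (γ - 1) * C :=
          mul_le_mul_of_nonneg_left h3 h2
      _ = C * (t - s) ^ (γ - 1) := mul_comm _ _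

lemma integral_ker {γ : ℝ} (hγ0 : 0 < γ) {c t t' : ℝ} (h1 : c ≤ t) (h2 : t ≤ t') :
    ∫ s in c..t, (t' - s) ^ (γ - 1) = ((t' - c) ^ γ - (t' - t) ^ γ) / γ := by
  have := intervalIntegral.integral_comp_sub_left (a := c) (b := t)
    (fun x : ℝ => x ^ (γ - 1)) t'
  rw [this, integral_rpow (Or.inl (by linarith))]
  ring_nf



-- integrability of the primed kernel against g on subintervals
lemma integrable_kernel_mul' {γ : ℝ} (hγ0 : 0 < γ) (hγ1 : γ < 1) {c t t' : ℝ}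
    (hc : 0 ≤ c) (h1 : c ≤ t) (h2 : t ≤ t')
    {g : ℝ → ℝ} (hg : ContinuousOn g (Icc 0 t')) :
    IntervalIntegrable (fun s => (t' - s) ^ (γ - 1) * g s) volume c t := by
  have h := integrable_kernel_mul hγ0 hγ1 (le_trans hc (le_trans h1 h2)) hg
  apply h.mono_set
  rw [uIcc_of_le (le_trans hc (le_trans h1 h2)), uIcc_of_le h1]
  intro x hx
  exact ⟨le_trans hc hx.1, le_trans hx.2 h2⟩

lemma volterra_modulus {γ : ℝ} (hγ0 : 0 < γ) (hγ1 : γ < 1) {T₁ C : ℝ} (hC : 0 ≤ C)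
    {g : ℝ → ℝ} (hg : ContinuousOn g (Icc 0 T₁)) (hb : ∀ s ∈ Icc (0:ℝ) T₁, |g s| ≤ C)
    {t t' : ℝ} (h0 : 0 ≤ t) (htt' : t ≤ t') (ht' : t' ≤ T₁) :
    |(∫ s in (0:ℝ)..t', (t' - s) ^ (γ - 1) * g s) -
      ∫ s in (0:ℝ)..t, (t - s) ^ (γ - 1) * g s| ≤ 2 * C / γ * (t' - t) ^ γ := by
  have hT0 : (0:ℝ) ≤ T₁ := le_trans (le_trans h0 htt') ht'
  have hgt : ContinuousOn g (Icc 0 t) := hg.mono (Icc_subset_Icc le_rfl (le_trans htt' ht'))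
  have hi1 : IntervalIntegrable (fun s => (t' - s) ^ (γ - 1) * g s) volume 0 t :=
    integrable_kernel_mul' hγ0 hγ1 le_rfl h0 htt' (hg.mono (Icc_subset_Icc le_rfl ht'))
  have hi2 : IntervalIntegrable (fun s => (t' - s) ^ (γ - 1) * g s) volume t t' :=
    integrable_kernel_mul' hγ0 hγ1 h0 htt' le_rfl (hg.mono (Icc_subset_Icc le_rfl ht'))
  have hi3 : IntervalIntegrable (fun s => (t - s) ^ (γ - 1) * g s) volume 0 t :=
    integrable_kernel_mul hγ0 hγ1 h0 hgt
  have hker_t : IntervalIntegrable (fun s : ℝ => (t - s) ^ (γ - 1)) volume 0 t := by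
    have h1 : IntervalIntegrable (fun x : ℝ => x ^ (γ - 1)) volume 0 t :=
      intervalIntegral.intervalIntegrable_rpow' (by linarith)
    simpa using (h1.comp_sub_left t).symm
  have hker_t' : IntervalIntegrable (fun s : ℝ => (t' - s) ^ (γ - 1)) volume 0 t := by
    have h1 : IntervalIntegrable (fun x : ℝ => x ^ (γ - 1)) volume (t' - t) t' :=
      intervalIntegral.intervalIntegrable_rpow' (by linarith)
    have h2 := h1.comp_sub_left t'
    simpa using h2.symm
  have hker_t'2 : IntervalIntegrable (fun s : ℝ => (t' - s) ^ (γ - 1)) volume t t' := by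
    have h1 : IntervalIntegrable (fun x : ℝ => x ^ (γ - 1)) volume 0 (t' - t) :=
      intervalIntegral.intervalIntegrable_rpow' (by linarith)
    have h2 := h1.comp_sub_left t'
    simpa using h2.symm
  have hsplit : (∫ s in (0:ℝ)..t', (t' - s) ^ (γ - 1) * g s)
      = (∫ s in (0:ℝ)..t, (t' - s) ^ (γ - 1) * g s)
        + ∫ s in t..t', (t' - s) ^ (γ - 1) * g s :=
    (intervalIntegral.integral_add_adjacent_intervals hi1 hi2).symm
  -- first piece
  have hA : |(∫ s in (0:ℝ)..t, (t' - s) ^ (γ - 1) * g s)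
      - ∫ s in (0:ℝ)..t, (t - s) ^ (γ - 1) * g s| ≤ C / γ * (t' - t) ^ γ := by
    rw [← intervalIntegral.integral_sub hi1 hi3]
    have habs := intervalIntegral.abs_integral_le_integral_abs (μ := volume)
      (f := fun s => (t' - s) ^ (γ - 1) * g s - (t - s) ^ (γ - 1) * g s) h0
    refine le_trans habs ?_
    have hmono : (∫ s in (0:ℝ)..t, |(t' - s) ^ (γ - 1) * g s - (t - s) ^ (γ - 1) * g s|)
        ≤ ∫ s in (0:ℝ)..t, ((t - s) ^ (γ - 1) - (t' - s) ^ (γ - 1)) * C := by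
      apply intervalIntegral.integral_mono_ae_restrict h0 (hi1.sub hi3).abs
        ((hker_t.sub hker_t').mul_const C)
      have hae : ∀ᵐ x ∂(volume.restrict (Icc 0 t)), x ≠ t := by
        apply ae_restrict_of_ae
        rw [ae_iff]
        have : {x : ℝ | ¬ x ≠ t} = {t} := by ext x; simp
        rw [this]
        exact measure_singleton t
      filter_upwards [hae, ae_restrict_mem measurableSet_Icc] with s hst hs
      have hst' : s < t := lt_of_le_of_ne hs.2 hst
      have k1 : (0:ℝ) < t - s := by linarith
      have k2 : (0:ℝ) < t' - s := by linarith
      have k3 : (t' - s) ^ (γ - 1) ≤ (t - s) ^ (γ - 1) := by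
        apply Real.rpow_le_rpow_of_nonpos k1 (by linarith) (by linarith)
      have k4 : |g s| ≤ C := hb s ⟨hs.1, le_trans hs.2 (le_trans htt' ht')⟩
      calc |(t' - s) ^ (γ - 1) * g s - (t - s) ^ (γ - 1) * g s|
          = ((t - s) ^ (γ - 1) - (t' - s) ^ (γ - 1)) * |g s| := by
            rw [← sub_mul, abs_mul, abs_of_nonpos (by linarith)]
            ring
        _ ≤ ((t - s) ^ (γ - 1) - (t' - s) ^ (γ - 1)) * C :=
            mul_le_mul_of_nonneg_left k4 (by linarith)
    refine le_trans hmono ?_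
    rw [intervalIntegral.integral_mul_const, intervalIntegral.integral_sub hker_t hker_t',
      integral_ker hγ0 h0 le_rfl, integral_ker hγ0 h0 htt']
    have e0 : (t - t : ℝ) = 0 := by ring
    rw [e0, Real.zero_rpow hγ0.ne']
    simp only [sub_zero]
    have h1 : t ^ γ ≤ t' ^ γ := Real.rpow_le_rpow h0 htt' hγ0.le
    have h2 : (0:ℝ) ≤ (t' - t) ^ γ := Real.rpow_nonneg (by linarith) _
    rw [div_sub_div_same]
    calc (t ^ γ - (t' ^ γ - (t' - t) ^ γ)) / γ * C
        ≤ (t' - t) ^ γ / γ * C := by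
          have hnum : t ^ γ - (t' ^ γ - (t' - t) ^ γ) ≤ (t' - t) ^ γ := by linarith
          have hγi : (0:ℝ) ≤ γ⁻¹ := by positivity
          rw [div_eq_mul_inv, div_eq_mul_inv]
          exact mul_le_mul_of_nonneg_right (mul_le_mul_of_nonneg_right hnum hγi) hC
      _ = C / γ * (t' - t) ^ γ := by ring
  -- second piece
  have hB : |∫ s in t..t', (t' - s) ^ (γ - 1) * g s| ≤ C / γ * (t' - t) ^ γ := by
    have habs := intervalIntegral.abs_integral_le_integral_abs (μ := volume)
      (f := fun s => (t' - s) ^ (γ - 1) * g s) htt'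
    refine le_trans habs ?_
    have hmono : (∫ s in t..t', |(t' - s) ^ (γ - 1) * g s|)
        ≤ ∫ s in t..t', (t' - s) ^ (γ - 1) * C := by
      apply intervalIntegral.integral_mono_on htt' hi2.abs (hker_t'2.mul_const C)
      intro s hs
      have k1 : (0:ℝ) ≤ t' - s := by linarith [hs.2]
      have k2 : (0:ℝ) ≤ (t' - s) ^ (γ - 1) := Real.rpow_nonneg k1 _
      have k4 : |g s| ≤ C := hb s ⟨le_trans h0 hs.1, le_trans hs.2 ht'⟩
      rw [abs_mul, abs_of_nonneg k2]
      exact mul_le_mul_of_nonneg_left k4 k2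
    refine le_trans hmono ?_
    rw [intervalIntegral.integral_mul_const, integral_ker hγ0 htt' le_rfl]
    have e0 : (t' - t' : ℝ) = 0 := by ring
    rw [e0, Real.zero_rpow hγ0.ne', sub_zero]
    calc (t' - t) ^ γ / γ * C = C / γ * (t' - t) ^ γ := by ring
      _ ≤ C / γ * (t' - t) ^ γ := le_rfl
  calc |(∫ s in (0:ℝ)..t', (t' - s) ^ (γ - 1) * g s) -
      ∫ s in (0:ℝ)..t, (t - s) ^ (γ - 1) * g s|
      = |((∫ s in (0:ℝ)..t, (t' - s) ^ (γ - 1) * g s)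
          - ∫ s in (0:ℝ)..t, (t - s) ^ (γ - 1) * g s)
          + ∫ s in t..t', (t' - s) ^ (γ - 1) * g s| := by rw [hsplit]; congr 1; ring
    _ ≤ |(∫ s in (0:ℝ)..t, (t' - s) ^ (γ - 1) * g s)
          - ∫ s in (0:ℝ)..t, (t - s) ^ (γ - 1) * g s|
          + |∫ s in t..t', (t' - s) ^ (γ - 1) * g s| := abs_add_le _ _
    _ ≤ C / γ * (t' - t) ^ γ + C / γ * (t' - t) ^ γ := add_le_add hA hB
    _ = 2 * C / γ * (t' - t) ^ γ := by ring



lemma volterra_continuousOn {γ : ℝ} (hγ0 : 0 < γ) (hγ1 : γ < 1) {T₁ C : ℝ} (hC : 0 ≤ C)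
    {g : ℝ → ℝ} (hg : ContinuousOn g (Icc 0 T₁)) (hb : ∀ s ∈ Icc (0:ℝ) T₁, |g s| ≤ C) :
    ContinuousOn (fun t => ∫ s in (0:ℝ)..t, (t - s) ^ (γ - 1) * g s) (Icc 0 T₁) := by
  have key : ∀ t ∈ Icc (0:ℝ) T₁, ∀ t' ∈ Icc (0:ℝ) T₁,
      |(∫ s in (0:ℝ)..t', (t' - s) ^ (γ - 1) * g s) -
        ∫ s in (0:ℝ)..t, (t - s) ^ (γ - 1) * g s| ≤ 2 * C / γ * |t' - t| ^ γ := by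
    intro t ht t' ht'
    rcases le_total t t' with h | h
    · rw [abs_of_nonneg (by linarith : (0:ℝ) ≤ t' - t)]
      exact volterra_modulus hγ0 hγ1 hC hg hb ht.1 h ht'.2
    · rw [abs_sub_comm, abs_sub_comm t' t, abs_of_nonneg (by linarith : (0:ℝ) ≤ t - t')]
      exact volterra_modulus hγ0 hγ1 hC hg hb ht'.1 h ht.2
  rw [Metric.continuousOn_iff]
  intro a ha ε hε
  set B : ℝ := 2 * C / γ + 1 with hB
  have hB0 : 0 < B := by positivity
  refine ⟨(ε / B) ^ γ⁻¹, by positivity, ?_⟩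
  intro b hb' hdist
  have h1 : |b - a| ^ γ < ((ε / B) ^ γ⁻¹) ^ γ := by
    apply Real.rpow_lt_rpow (abs_nonneg _) _ hγ0
    rwa [Real.dist_eq] at hdist
  rw [Real.rpow_inv_rpow (by positivity) hγ0.ne'] at h1
  rw [Real.dist_eq]
  calc |(∫ s in (0:ℝ)..b, (b - s) ^ (γ - 1) * g s) -
        ∫ s in (0:ℝ)..a, (a - s) ^ (γ - 1) * g s| ≤ 2 * C / γ * |b - a| ^ γ := key a ha b hb'
    _ ≤ B * |b - a| ^ γ := by
        apply mul_le_mul_of_nonneg_right _ (Real.rpow_nonneg (abs_nonneg _) _)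
        rw [hB]; linarith [Real.rpow_nonneg (abs_nonneg (b - a)) γ]
    _ < B * (ε / B) := by
        apply mul_lt_mul_of_pos_left h1 hB0
    _ = ε := by field_simp
  -- done

lemma real_beta (a b : ℝ) (ha : 0 < a) (hb : 0 < b) :
    ∫ x in (0:ℝ)..1, x ^ (a - 1) * (1 - x) ^ (b - 1)
      = Real.Gamma a * Real.Gamma b / Real.Gamma (a + b) := by
  have h := Complex.Gamma_mul_Gamma_eq_betaIntegral
    (s := (a:ℂ)) (t := (b:ℂ)) (by simpa using ha) (by simpa using hb)
  have hcast : Complex.betaIntegral (a:ℂ) (b:ℂ)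
      = ((∫ x in (0:ℝ)..1, x ^ (a - 1) * (1 - x) ^ (b - 1) : ℝ) : ℂ) := by
    rw [Complex.betaIntegral, ← intervalIntegral.integral_ofReal]
    apply intervalIntegral.integral_congr
    intro x hx
    rw [uIcc_of_le (by norm_num : (0:ℝ) ≤ 1)] at hx
    have hx0 : (0:ℝ) ≤ x := hx.1
    have hx1 : (0:ℝ) ≤ 1 - x := by linarith [hx.2]
    push_cast
    rw [Complex.ofReal_cpow hx0, Complex.ofReal_cpow hx1]
    push_cast
    ring
  rw [hcast, Complex.Gamma_ofReal, Complex.Gamma_ofReal, ← Complex.ofReal_add,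
    Complex.Gamma_ofReal, ← Complex.ofReal_mul, ← Complex.ofReal_mul] at h
  have h' := Complex.ofReal_injective h
  have hG : Real.Gamma (a + b) ≠ 0 := (Real.Gamma_pos_of_pos (by linarith)).ne'
  field_simp [hG] at h' ⊢
  linarith [h']

lemma beta_scaled {γ : ℝ} (hγ0 : 0 < γ) (β : ℝ) (hβ : 0 ≤ β) (t : ℝ) (ht : 0 ≤ t) :
    ∫ s in (0:ℝ)..t, (t - s) ^ (γ - 1) * s ^ β
      = (Real.Gamma (β + 1) * Real.Gamma γ / Real.Gamma (β + 1 + γ)) * t ^ (γ + β) := by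
  rcases eq_or_lt_of_le ht with h | h
  · rw [← h]
    simp [Real.zero_rpow (by positivity : γ + β ≠ 0)]
  · have htne : t ≠ 0 := h.ne'
    have hcomp := intervalIntegral.integral_comp_mul_left
      (a := (0:ℝ)) (b := 1) (fun s => (t - s) ^ (γ - 1) * s ^ β) htne
    rw [mul_zero, mul_one] at hcomp
    have hval : (∫ x in (0:ℝ)..1, (t - t * x) ^ (γ - 1) * (t * x) ^ β)
        = (t ^ (γ - 1) * t ^ β) * (Real.Gamma (β + 1) * Real.Gamma γ / Real.Gamma (β + 1 + γ)) := by
      have hcongr : ∀ x ∈ uIcc (0:ℝ) 1,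
          (t - t * x) ^ (γ - 1) * (t * x) ^ β
            = (t ^ (γ - 1) * t ^ β) * (x ^ ((β + 1) - 1) * (1 - x) ^ (γ - 1)) := by
        intro x hx
        rw [uIcc_of_le (by norm_num : (0:ℝ) ≤ 1)] at hx
        have hx1 : (0:ℝ) ≤ 1 - x := by linarith [hx.2]
        have e1 : t - t * x = t * (1 - x) := by ring
        rw [e1, Real.mul_rpow h.le hx1, Real.mul_rpow h.le hx.1]
        have : (β + 1) - 1 = β := by ring
        rw [this]
        ring
      rw [intervalIntegral.integral_congr hcongr, intervalIntegral.integral_const_mul,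
        real_beta (β + 1) γ (by linarith) hγ0]
    rw [hval] at hcomp
    -- hcomp : ∫ x in 0..1, f (t x) = t⁻¹ • ∫ s in 0..t, f s
    have := hcomp.symm
    rw [smul_eq_mul] at this
    have h2 : (∫ s in (0:ℝ)..t, (t - s) ^ (γ - 1) * s ^ β)
        = t * ((t ^ (γ - 1) * t ^ β) * (Real.Gamma (β + 1) * Real.Gamma γ / Real.Gamma (β + 1 + γ))) := by
      field_simp at this ⊢
      linarith [this]
    rw [h2]
    have e : t * (t ^ (γ - 1) * t ^ β) = t ^ (γ + β) := by
      rw [← Real.rpow_add h]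
      nth_rewrite 1 [← Real.rpow_one t]
      rw [← Real.rpow_add h]
      congr 1
      ring
    rw [show t * (t ^ (γ - 1) * t ^ β * (Real.Gamma (β + 1) * Real.Gamma γ / Real.Gamma (β + 1 + γ)))
        = (Real.Gamma (β + 1) * Real.Gamma γ / Real.Gamma (β + 1 + γ)) * (t * (t ^ (γ - 1) * t ^ β)) from by
      ring, e]



lemma rpow_continuousOn {β : ℝ} (hβ : 0 ≤ β) (s : Set ℝ) :
    ContinuousOn (fun x : ℝ => x ^ β) s := by
  apply continuousOn_of_forall_continuousAt
  intro x _
  exact Real.continuousAt_rpow_const x β (Or.inr hβ)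

lemma kernel_integral_bound {γ : ℝ} (hγ0 : 0 < γ) (hγ1 : γ < 1) {t C β : ℝ}
    (ht : 0 ≤ t) (hC : 0 ≤ C) (hβ : 0 ≤ β) {g : ℝ → ℝ}
    (hg : ContinuousOn g (Icc 0 t)) (hb : ∀ s ∈ Icc (0:ℝ) t, |g s| ≤ C * s ^ β) :
    |∫ s in (0:ℝ)..t, (t - s) ^ (γ - 1) * g s|
      ≤ C * (Real.Gamma (β + 1) * Real.Gamma γ / Real.Gamma (β + 1 + γ)) * t ^ (γ + β) := by
  have hpow : ContinuousOn (fun s : ℝ => C * s ^ β) (Icc 0 t) :=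
    (continuousOn_const).mul (rpow_continuousOn hβ _)
  have hint1 := integrable_kernel_mul hγ0 hγ1 ht hg
  have hint2 := integrable_kernel_mul hγ0 hγ1 ht hpow
  have habs := intervalIntegral.abs_integral_le_integral_abs (μ := volume)
    (f := fun s => (t - s) ^ (γ - 1) * g s) ht
  refine le_trans habs ?_
  have hmono : (∫ s in (0:ℝ)..t, |(t - s) ^ (γ - 1) * g s|)
      ≤ ∫ s in (0:ℝ)..t, (t - s) ^ (γ - 1) * (C * s ^ β) := by
    apply intervalIntegral.integral_mono_on ht hint1.abs hint2
    intro s hs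
    have k1 : (0:ℝ) ≤ t - s := by linarith [hs.2]
    have k2 : (0:ℝ) ≤ (t - s) ^ (γ - 1) := Real.rpow_nonneg k1 _
    rw [abs_mul, abs_of_nonneg k2]
    exact mul_le_mul_of_nonneg_left (hb s hs) k2
  refine le_trans hmono ?_
  have e : (∫ s in (0:ℝ)..t, (t - s) ^ (γ - 1) * (C * s ^ β))
      = C * ∫ s in (0:ℝ)..t, (t - s) ^ (γ - 1) * s ^ β := by
    rw [← intervalIntegral.integral_const_mul]
    apply intervalIntegral.integral_congr
    intro s _
    ring
  rw [e, beta_scaled hγ0 β hβ t ht, ← mul_assoc]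

end FodeAux


open FodeAux

theorem fode_exists_unique_solution {γ : ℝ} (hγ0 : 0 < γ) (hγ1 : γ < 1) (v₀ A L M T₁ : ℝ)
    (hA : 0 < A) (hL : 0 < L) (hM0 : 0 ≤ M) (hT₁pos : 0 < T₁)
    (f : ℝ → ℝ → ℝ)
    (hfc : ContinuousOn (fun p : ℝ × ℝ => f p.1 p.2) (Icc 0 T₁ ×ˢ Icc (v₀ - A) (v₀ + A)))
    (hlip : ∀ t ∈ Icc (0:ℝ) T₁, ∀ v₁ ∈ Icc (v₀ - A) (v₀ + A), ∀ v₂ ∈ Icc (v₀ - A) (v₀ + A),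
      |f t v₁ - f t v₂| ≤ L * |v₁ - v₂|)
    (hMb : ∀ t ∈ Icc (0:ℝ) T₁, ∀ x ∈ Icc (v₀ - A) (v₀ + A), |f t x| ≤ M)
    (hbound : ∀ t ∈ Icc (0:ℝ) T₁, M * t ^ γ / Real.Gamma (1 + γ) ≤ A) :
    ∃ v : ℝ → ℝ,
      (ContinuousOn v (Icc 0 T₁) ∧
        (∀ t ∈ Icc (0:ℝ) T₁, v t ∈ Icc (v₀ - A) (v₀ + A)) ∧
        (∀ t ∈ Icc (0:ℝ) T₁,
          v t = v₀ + (1 / Real.Gamma γ) *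
            ∫ s in (0:ℝ)..t, (t - s) ^ (γ - 1) * f s (v s))) ∧
      ∀ w : ℝ → ℝ,
        (ContinuousOn w (Icc 0 T₁) ∧
          (∀ t ∈ Icc (0:ℝ) T₁, w t ∈ Icc (v₀ - A) (v₀ + A)) ∧
          (∀ t ∈ Icc (0:ℝ) T₁,
            w t = v₀ + (1 / Real.Gamma γ) *
              ∫ s in (0:ℝ)..t, (t - s) ^ (γ - 1) * f s (w s))) →
        ∀ t ∈ Icc (0:ℝ) T₁, w t = v t := by
  have hΓγ : 0 < Real.Gamma γ := Real.Gamma_pos_of_pos hγ0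
  have hΓ1γ : 0 < Real.Gamma (1 + γ) := Real.Gamma_pos_of_pos (by linarith)
  have hT₁0 : (0:ℝ) ≤ T₁ := hT₁pos.le
  haveI hcs : CompactSpace (Icc (0:ℝ) T₁) := isCompact_iff_compactSpace.mp isCompact_Icc
  set Y : Set C(Icc (0:ℝ) T₁, ℝ) := {u | ∀ x, u x ∈ Icc (v₀ - A) (v₀ + A)} with hYdef
  have hYclosed : IsClosed Y := by
    have e : Y = ⋂ x : Icc (0:ℝ) T₁,
        {u : C(Icc (0:ℝ) T₁, ℝ) | u x ∈ Icc (v₀ - A) (v₀ + A)} := by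
      ext u; simp [hYdef, Set.mem_iInter]
    rw [e]
    exact isClosed_iInter fun x =>
      (isClosed_Icc).preimage (continuous_eval_const x)
  haveI : Nonempty Y := ⟨⟨ContinuousMap.const _ v₀, fun x => ⟨by simp; linarith, by simp; linarith⟩⟩⟩
  haveI : CompleteSpace Y := hYclosed.completeSpace_coe
  let ext : Y → ℝ → ℝ := fun u => IccExtend hT₁0 ⇑(u : C(Icc (0:ℝ) T₁, ℝ))
  have hext_cont : ∀ u : Y, Continuous (ext u) := fun u =>
    ((u : C(Icc (0:ℝ) T₁, ℝ)).continuous).comp continuous_projIcc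
  have hext_mem : ∀ (u : Y) (s : ℝ), ext u s ∈ Icc (v₀ - A) (v₀ + A) := fun u s => u.2 _
  have hext_eq : ∀ (u : Y) (s : ℝ) (hs : s ∈ Icc (0:ℝ) T₁),
      ext u s = (u : C(Icc (0:ℝ) T₁, ℝ)) ⟨s, hs⟩ := by
    intro u s hs
    simp only [ext, IccExtend_of_mem hT₁0 _ hs]
  have hcomp : ∀ u : Y, ContinuousOn (fun s => f s (ext u s)) (Icc 0 T₁) := by
    intro u
    apply hfc.comp (continuousOn_id.prodMk (hext_cont u).continuousOn)
    intro s hs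
    exact ⟨hs, hext_mem u s⟩
  have hgbdd : ∀ (u : Y), ∀ s ∈ Icc (0:ℝ) T₁, |f s (ext u s)| ≤ M :=
    fun u s hs => hMb s hs _ (hext_mem u s)
  have hFcont : ∀ u : Y, ContinuousOn
      (fun t : ℝ => ∫ s in (0:ℝ)..t, (t - s) ^ (γ - 1) * f s (ext u s)) (Icc 0 T₁) :=
    fun u => volterra_continuousOn hγ0 hγ1 hM0 (hcomp u) (hgbdd u)
  have hPmem : ∀ (u : Y) (x : Icc (0:ℝ) T₁),
      v₀ + (1 / Real.Gamma γ) * ∫ s in (0:ℝ)..(x:ℝ), ((x:ℝ) - s) ^ (γ - 1) * f s (ext u s)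
        ∈ Icc (v₀ - A) (v₀ + A) := by
    intro u x
    have hx0 : (0:ℝ) ≤ (x:ℝ) := x.2.1
    have hb := kernel_integral_bound hγ0 hγ1 (t := (x:ℝ)) (C := M) (β := 0)
      hx0 hM0 le_rfl ((hcomp u).mono (Icc_subset_Icc le_rfl x.2.2))
      (fun s hs => by
        rw [Real.rpow_zero, mul_one]
        exact hgbdd u s ⟨hs.1, le_trans hs.2 x.2.2⟩)
    have hb2 : |∫ s in (0:ℝ)..(x:ℝ), ((x:ℝ) - s) ^ (γ - 1) * f s (ext u s)|
        ≤ M * Real.Gamma γ / Real.Gamma (1 + γ) * (x:ℝ) ^ γ := by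
      refine le_trans hb (le_of_eq ?_)
      rw [show ((0:ℝ) + 1 + γ) = 1 + γ by ring, show (γ + 0 : ℝ) = γ by ring,
        show ((0:ℝ) + 1) = 1 by ring, Real.Gamma_one]
      ring
    have hval : |(1 / Real.Gamma γ) *
        ∫ s in (0:ℝ)..(x:ℝ), ((x:ℝ) - s) ^ (γ - 1) * f s (ext u s)| ≤ A := by
      rw [abs_mul, abs_of_nonneg (by positivity : (0:ℝ) ≤ 1 / Real.Gamma γ)]
      have hbnd := hbound (x:ℝ) ⟨hx0, x.2.2⟩
      calc (1 / Real.Gamma γ) *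
            |∫ s in (0:ℝ)..(x:ℝ), ((x:ℝ) - s) ^ (γ - 1) * f s (ext u s)|
          ≤ (1 / Real.Gamma γ) * (M * Real.Gamma γ / Real.Gamma (1 + γ) * (x:ℝ) ^ γ) :=
            mul_le_mul_of_nonneg_left hb2 (by positivity)
        _ = M * (x:ℝ) ^ γ / Real.Gamma (1 + γ) := by field_simp
        _ ≤ A := hbnd
    obtain ⟨hv1, hv2⟩ := abs_le.mp hval
    exact ⟨by linarith, by linarith⟩
  let Pmap : Y → Y := fun u =>
    ⟨⟨fun x => v₀ + (1 / Real.Gamma γ) *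
        ∫ s in (0:ℝ)..(x:ℝ), ((x:ℝ) - s) ^ (γ - 1) * f s (ext u s),
      (continuousOn_const.add (continuousOn_const.mul (hFcont u))).restrict⟩,
      fun x => hPmem u x⟩
  have hiter : ∀ n : ℕ, ∀ u w : Y, ∀ x : Icc (0:ℝ) T₁,
      |((Pmap^[n] u : Y) : C(Icc (0:ℝ) T₁, ℝ)) x - ((Pmap^[n] w : Y) : C(Icc (0:ℝ) T₁, ℝ)) x|
        ≤ L ^ n * (x:ℝ) ^ (γ * n) / Real.Gamma (γ * n + 1) * dist u w := by
    intro n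
    induction n with
    | zero =>
      intro u w x
      simp only [Function.iterate_zero, id_eq, pow_zero, Nat.cast_zero, mul_zero,
        Real.rpow_zero, zero_add, Real.Gamma_one, div_one, one_mul]
      rw [← Real.dist_eq]
      exact le_trans (ContinuousMap.dist_apply_le_dist x) (le_of_eq (Subtype.dist_eq u w).symm)
    | succ n ih =>
      intro u w x
      rw [Function.iterate_succ_apply', Function.iterate_succ_apply']
      set a := Pmap^[n] u with ha
      set b := Pmap^[n] w with hb'
      set d := dist u w with hd
      have hd0 : 0 ≤ d := dist_nonneg
      have hΓn : 0 < Real.Gamma (γ * n + 1) := Real.Gamma_pos_of_pos (by positivity)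
      have hΓn1 : 0 < Real.Gamma (γ * ((n:ℕ)+1:ℕ) + 1) := Real.Gamma_pos_of_pos (by positivity)
      have hx0 : (0:ℝ) ≤ (x:ℝ) := x.2.1
      have hxT : (x:ℝ) ≤ T₁ := x.2.2
      have hint_a : IntervalIntegrable
          (fun s => ((x:ℝ) - s) ^ (γ - 1) * f s (ext a s)) volume 0 (x:ℝ) :=
        integrable_kernel_mul hγ0 hγ1 hx0 ((hcomp a).mono (Icc_subset_Icc le_rfl hxT))
      have hint_b : IntervalIntegrable
          (fun s => ((x:ℝ) - s) ^ (γ - 1) * f s (ext b s)) volume 0 (x:ℝ) :=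
        integrable_kernel_mul hγ0 hγ1 hx0 ((hcomp b).mono (Icc_subset_Icc le_rfl hxT))
      have hPa : ((Pmap a : Y) : C(Icc (0:ℝ) T₁, ℝ)) x - ((Pmap b : Y) : C(Icc (0:ℝ) T₁, ℝ)) x
          = (1 / Real.Gamma γ) * ∫ s in (0:ℝ)..(x:ℝ),
              ((x:ℝ) - s) ^ (γ - 1) * (f s (ext a s) - f s (ext b s)) := by
        have e : (∫ s in (0:ℝ)..(x:ℝ), ((x:ℝ) - s) ^ (γ - 1) * (f s (ext a s) - f s (ext b s)))
            = (∫ s in (0:ℝ)..(x:ℝ), ((x:ℝ) - s) ^ (γ - 1) * f s (ext a s))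
              - ∫ s in (0:ℝ)..(x:ℝ), ((x:ℝ) - s) ^ (γ - 1) * f s (ext b s) := by
          rw [← intervalIntegral.integral_sub hint_a hint_b]
          apply intervalIntegral.integral_congr
          intro s _
          ring
        show (v₀ + (1 / Real.Gamma γ) *
            ∫ s in (0:ℝ)..(x:ℝ), ((x:ℝ) - s) ^ (γ - 1) * f s (ext a s))
          - (v₀ + (1 / Real.Gamma γ) *
            ∫ s in (0:ℝ)..(x:ℝ), ((x:ℝ) - s) ^ (γ - 1) * f s (ext b s)) = _
        rw [e]
        ring
      rw [hPa, abs_mul, abs_of_nonneg (by positivity : (0:ℝ) ≤ 1 / Real.Gamma γ)]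
      set Cn := L ^ (n+1) * d / Real.Gamma (γ * n + 1) with hCn
      have hCn0 : 0 ≤ Cn := by positivity
      have hbnd := kernel_integral_bound hγ0 hγ1 (t := (x:ℝ)) (C := Cn) (β := γ * n)
        hx0 hCn0 (by positivity)
        (((hcomp a).sub (hcomp b)).mono (Icc_subset_Icc le_rfl hxT))
        (fun s hs => by
          have hsT : s ∈ Icc (0:ℝ) T₁ := ⟨hs.1, le_trans hs.2 hxT⟩
          have hlips := hlip s hsT _ (hext_mem a s) _ (hext_mem b s)
          have h1 : |ext a s - ext b s|
              ≤ L ^ n * s ^ (γ * n) / Real.Gamma (γ * n + 1) * d := by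
            rw [hext_eq a s hsT, hext_eq b s hsT]
            exact ih u w ⟨s, hsT⟩
          calc |f s (ext a s) - f s (ext b s)| ≤ L * |ext a s - ext b s| := hlips
            _ ≤ L * (L ^ n * s ^ (γ * n) / Real.Gamma (γ * n + 1) * d) :=
                mul_le_mul_of_nonneg_left h1 hL.le
            _ = Cn * s ^ (γ * n) := by rw [hCn]; ring)
      refine le_trans (mul_le_mul_of_nonneg_left hbnd
        (by positivity : (0:ℝ) ≤ 1 / Real.Gamma γ)) (le_of_eq ?_)
      rw [hCn]
      have e1 : γ * (n:ℝ) + 1 + γ = γ * (((n:ℕ)+1:ℕ):ℝ) + 1 := by push_cast; ring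
      have e2 : γ + γ * (n:ℝ) = γ * (((n:ℕ)+1:ℕ):ℝ) := by push_cast; ring
      rw [e1, e2]
      have hne1 : Real.Gamma γ ≠ 0 := hΓγ.ne'
      have hne2 : Real.Gamma (γ * (n:ℝ) + 1) ≠ 0 := hΓn.ne'
      have hne3 : Real.Gamma (γ * (((n:ℕ)+1:ℕ):ℝ) + 1) ≠ 0 := by
        push_cast
        push_cast at hΓn1
        exact hΓn1.ne'
      field_simp
  have hdistY : ∀ (n : ℕ) (u w : Y), dist (Pmap^[n] u) (Pmap^[n] w)
      ≤ L ^ n * T₁ ^ (γ * n) / Real.Gamma (γ * n + 1) * dist u w := by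
    intro n u w
    have hΓn : 0 < Real.Gamma (γ * n + 1) := Real.Gamma_pos_of_pos (by positivity)
    have hc0 : 0 ≤ L ^ n * T₁ ^ (γ * n) / Real.Gamma (γ * n + 1) := by positivity
    rw [Subtype.dist_eq, ContinuousMap.dist_le (mul_nonneg hc0 dist_nonneg)]
    intro x
    rw [Real.dist_eq]
    refine le_trans (hiter n u w x) ?_
    have hxm : (x:ℝ) ^ (γ * n) ≤ T₁ ^ (γ * n) := Real.rpow_le_rpow x.2.1 x.2.2 (by positivity)
    have hd0 : (0:ℝ) ≤ dist u w := dist_nonneg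
    gcongr
  have hz : (0:ℝ) ≤ L * T₁ ^ γ := by positivity
  have hsum := summable_ml γ hγ0 (L * T₁ ^ γ) hz
  have hterm : (fun n : ℕ => (L * T₁ ^ γ) ^ n / Real.Gamma (γ * n + 1))
      = fun n : ℕ => L ^ n * T₁ ^ (γ * n) / Real.Gamma (γ * n + 1) := by
    funext n
    rw [mul_pow, ← Real.rpow_natCast (T₁ ^ γ) n, ← Real.rpow_mul hT₁0]
  have htend := hsum.tendsto_atTop_zero
  rw [hterm] at htend
  obtain ⟨n₀, hn₀⟩ := (htend.eventually (gt_mem_nhds one_pos)).exists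
  have hΓn₀ : 0 < Real.Gamma (γ * n₀ + 1) := Real.Gamma_pos_of_pos (by positivity)
  have hc0 : 0 ≤ L ^ n₀ * T₁ ^ (γ * n₀) / Real.Gamma (γ * n₀ + 1) := by positivity
  have hcontr : ContractingWith ⟨L ^ n₀ * T₁ ^ (γ * n₀) / Real.Gamma (γ * n₀ + 1), hc0⟩
      (Pmap^[n₀]) := by
    constructor
    · exact_mod_cast hn₀
    · exact LipschitzWith.of_dist_le_mul fun u w => hdistY n₀ u w
  let vY : Y := ContractingWith.fixedPoint (Pmap^[n₀]) hcontr
  have hfix : Function.IsFixedPt (Pmap^[n₀]) vY := hcontr.fixedPoint_isFixedPt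
  have hPfix : Pmap vY = vY := by
    have h1 : Function.IsFixedPt (Pmap^[n₀]) (Pmap vY) := by
      show (Pmap^[n₀]) (Pmap vY) = Pmap vY
      rw [← Function.iterate_succ_apply, Function.iterate_succ_apply']
      rw [hfix]
    exact hcontr.fixedPoint_unique h1
  have huniq : ∀ y : Y, Pmap y = y → y = vY := fun y hy =>
    hcontr.fixedPoint_unique (Function.IsFixedPt.iterate hy n₀)
  refine ⟨ext vY, ⟨(hext_cont vY).continuousOn, fun t ht => hext_mem vY t, ?_⟩, ?_⟩
  · intro t ht
    have h1 : ext vY t = (vY : C(Icc (0:ℝ) T₁, ℝ)) ⟨t, ht⟩ := hext_eq vY t ht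
    have h2 : ((Pmap vY : Y) : C(Icc (0:ℝ) T₁, ℝ)) ⟨t, ht⟩
        = (vY : C(Icc (0:ℝ) T₁, ℝ)) ⟨t, ht⟩ := by rw [hPfix]
    rw [h1, ← h2]
    rfl
  · rintro w ⟨hwc, hwm, hweq⟩ t ht
    have hwX : Continuous ((Icc (0:ℝ) T₁).restrict w) := hwc.restrict
    have hwY : (⟨(Icc (0:ℝ) T₁).restrict w, hwX⟩ : C(Icc (0:ℝ) T₁, ℝ)) ∈ Y :=
      fun x => hwm x x.2
    set wel : Y := ⟨⟨(Icc (0:ℝ) T₁).restrict w, hwX⟩, hwY⟩ with hweldef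
    have hextw : ∀ s ∈ Icc (0:ℝ) T₁, ext wel s = w s := by
      intro s hs
      rw [hext_eq _ s hs]
      rfl
    have hPw : Pmap wel = wel := by
      apply Subtype.ext
      apply ContinuousMap.ext
      intro x
      show v₀ + (1 / Real.Gamma γ) * (∫ s in (0:ℝ)..(x:ℝ), ((x:ℝ) - s) ^ (γ - 1)
          * f s (ext wel s)) = w (x:ℝ)
      have hIcongr : (∫ s in (0:ℝ)..(x:ℝ), ((x:ℝ) - s) ^ (γ - 1)
            * f s (ext wel s))
          = ∫ s in (0:ℝ)..(x:ℝ), ((x:ℝ) - s) ^ (γ - 1) * f s (w s) := by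
        apply intervalIntegral.integral_congr
        intro s hs
        rw [uIcc_of_le x.2.1] at hs
        show ((x:ℝ) - s) ^ (γ - 1) * f s (ext wel s) = ((x:ℝ) - s) ^ (γ - 1) * f s (w s)
        rw [hextw s ⟨hs.1, le_trans hs.2 x.2.2⟩]
      rw [hIcongr, ← hweq (x:ℝ) ⟨x.2.1, x.2.2⟩]
    have hwvY : wel = vY := huniq _ hPw
    calc w t = (wel : C(Icc (0:ℝ) T₁, ℝ)) ⟨t, ht⟩ := rfl
      _ = (vY : C(Icc (0:ℝ) T₁, ℝ)) ⟨t, ht⟩ := by rw [hwvY]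
      _ = ext vY t := (hext_eq vY t ht).symm

theorem fode_local_existence_uniqueness
    (γ : ℝ) (hγ0 : 0 < γ) (hγ1 : γ < 1) (v₀ : ℝ) (T A L : ℝ)
    (hT : 0 < T) (hA : 0 < A) (hL : 0 < L)
    (f : ℝ → ℝ → ℝ)
    (hfc : ContinuousOn (fun p : ℝ × ℝ => f p.1 p.2)
      (Icc 0 T ×ˢ Icc (v₀ - A) (v₀ + A)))
    (hlip : ∀ t ∈ Icc (0:ℝ) T, ∀ v₁ ∈ Icc (v₀ - A) (v₀ + A),
      ∀ v₂ ∈ Icc (v₀ - A) (v₀ + A), |f t v₁ - f t v₂| ≤ L * |v₁ - v₂|)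
    (M : ℝ)
    (hM : M = sSup {y : ℝ | ∃ t ∈ Icc (0:ℝ) T, ∃ x ∈ Icc (v₀ - A) (v₀ + A), y = |f t x|})
    (S : Set ℝ)
    (hS : S = {t : ℝ | 0 ≤ t ∧
      (M / Real.Gamma (1 + γ)) * t ^ γ * mittagLeffler γ (L * t ^ γ) ≤ A})
    (T₁ : ℝ)
    (hT₁ : T₁ = if BddAbove S then min T (sSup S) else T) :
    0 < T₁ ∧
    ∃ v : ℝ → ℝ,
      (ContinuousOn v (Icc 0 T₁) ∧
        (∀ t ∈ Icc (0:ℝ) T₁, v t ∈ Icc (v₀ - A) (v₀ + A)) ∧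
        (∀ t ∈ Icc (0:ℝ) T₁,
          v t = v₀ + (1 / Real.Gamma γ) *
            ∫ s in (0:ℝ)..t, (t - s) ^ (γ - 1) * f s (v s))) ∧
      ∀ w : ℝ → ℝ,
        (ContinuousOn w (Icc 0 T₁) ∧
          (∀ t ∈ Icc (0:ℝ) T₁, w t ∈ Icc (v₀ - A) (v₀ + A)) ∧
          (∀ t ∈ Icc (0:ℝ) T₁,
            w t = v₀ + (1 / Real.Gamma γ) *
              ∫ s in (0:ℝ)..t, (t - s) ^ (γ - 1) * f s (w s))) →
        ∀ t ∈ Icc (0:ℝ) T₁, w t = v t := by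
  have hΓγ : 0 < Real.Gamma γ := Real.Gamma_pos_of_pos hγ0
  have hΓ1γ : 0 < Real.Gamma (1 + γ) := Real.Gamma_pos_of_pos (by linarith)
  -- facts about M
  have hDcomp : IsCompact (Icc (0:ℝ) T ×ˢ Icc (v₀ - A) (v₀ + A)) :=
    isCompact_Icc.prod isCompact_Icc
  have hset : {y : ℝ | ∃ t ∈ Icc (0:ℝ) T, ∃ x ∈ Icc (v₀ - A) (v₀ + A), y = |f t x|}
      = (fun p : ℝ × ℝ => |f p.1 p.2|) '' (Icc 0 T ×ˢ Icc (v₀ - A) (v₀ + A)) := by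
    ext y
    constructor
    · rintro ⟨t, ht, x, hx, rfl⟩; exact ⟨(t, x), ⟨ht, hx⟩, rfl⟩
    · rintro ⟨⟨t, x⟩, ⟨ht, hx⟩, rfl⟩; exact ⟨t, ht, x, hx, rfl⟩
  have hbdd : BddAbove {y : ℝ | ∃ t ∈ Icc (0:ℝ) T, ∃ x ∈ Icc (v₀ - A) (v₀ + A), y = |f t x|} := by
    rw [hset]
    exact (hDcomp.image_of_continuousOn hfc.abs).bddAbove
  have hMb : ∀ t ∈ Icc (0:ℝ) T, ∀ x ∈ Icc (v₀ - A) (v₀ + A), |f t x| ≤ M := by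
    intro t ht x hx
    rw [hM]
    exact le_csSup hbdd ⟨t, ht, x, hx, rfl⟩
  have hM0 : 0 ≤ M :=
    le_trans (abs_nonneg _) (hMb 0 ⟨le_rfl, hT.le⟩ v₀ ⟨by linarith, by linarith⟩)
  -- facts about S
  have hS0 : (0:ℝ) ∈ S := by
    rw [hS]
    refine ⟨le_rfl, ?_⟩
    rw [Real.zero_rpow hγ0.ne']
    simpa using hA.le
  have hSd : ∀ a ∈ S, ∀ t, 0 ≤ t → t ≤ a → t ∈ S := by
    rw [hS]
    rintro a ⟨ha0, haA⟩ t ht0 hta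
    refine ⟨ht0, le_trans ?_ haA⟩
    have h1 : t ^ γ ≤ a ^ γ := Real.rpow_le_rpow ht0 hta hγ0.le
    have ht0' : (0:ℝ) ≤ t ^ γ := Real.rpow_nonneg ht0 γ
    have hE1 : 1 ≤ mittagLeffler γ (L * t ^ γ) := one_le_ml γ hγ0 _ (by positivity)
    have h2 : mittagLeffler γ (L * t ^ γ) ≤ mittagLeffler γ (L * a ^ γ) :=
      ml_mono γ hγ0 (by positivity) (by nlinarith)
    have h3 : t ^ γ * mittagLeffler γ (L * t ^ γ) ≤ a ^ γ * mittagLeffler γ (L * a ^ γ) :=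
      mul_le_mul h1 h2 (by linarith) (Real.rpow_nonneg ha0 γ)
    have h4 : 0 ≤ M / Real.Gamma (1 + γ) := by positivity
    calc M / Real.Gamma (1 + γ) * t ^ γ * mittagLeffler γ (L * t ^ γ)
        = M / Real.Gamma (1 + γ) * (t ^ γ * mittagLeffler γ (L * t ^ γ)) := by ring
      _ ≤ M / Real.Gamma (1 + γ) * (a ^ γ * mittagLeffler γ (L * a ^ γ)) :=
          mul_le_mul_of_nonneg_left h3 h4
      _ = M / Real.Gamma (1 + γ) * a ^ γ * mittagLeffler γ (L * a ^ γ) := by ring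
  have hT₁T : T₁ ≤ T := by
    rw [hT₁]; split_ifs
    · exact min_le_left _ _
    · exact le_rfl
  have hT₁pos : 0 < T₁ := by
    rw [hT₁]
    split_ifs with hb
    · apply lt_min hT
      by_cases hM0' : M = 0
      · exfalso
        obtain ⟨b, hbub⟩ := hb
        have hmem : max (b + 1) 0 ∈ S := by
          rw [hS]
          refine ⟨le_max_right _ _, ?_⟩
          rw [hM0']
          simpa using hA.le
        have := hbub hmem
        have h2 : b + 1 ≤ max (b + 1) 0 := le_max_left _ _
        linarith
      · have hMpos : 0 < M := lt_of_le_of_ne hM0 (Ne.symm hM0')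
        have hE1 : 1 ≤ mittagLeffler γ L := one_le_ml γ hγ0 L hL.le
        set C₀ := M / Real.Gamma (1 + γ) * mittagLeffler γ L with hC₀def
        have hC₀ : 0 < C₀ := mul_pos (div_pos hMpos hΓ1γ) (by linarith)
        set t₀ := min 1 ((A / C₀) ^ γ⁻¹) with ht₀def
        have ht₀pos : 0 < t₀ := lt_min one_pos (Real.rpow_pos_of_pos (div_pos hA hC₀) _)
        have ht₀S : t₀ ∈ S := by
          rw [hS]
          refine ⟨ht₀pos.le, ?_⟩
          have h1 : t₀ ^ γ ≤ 1 := Real.rpow_le_one ht₀pos.le (min_le_left _ _) hγ0.le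
          have ht₀γ : 0 ≤ t₀ ^ γ := Real.rpow_nonneg ht₀pos.le γ
          have h2 : mittagLeffler γ (L * t₀ ^ γ) ≤ mittagLeffler γ L :=
            ml_mono γ hγ0 (by positivity) (by nlinarith)
          have h3 : t₀ ^ γ ≤ A / C₀ := by
            calc t₀ ^ γ ≤ ((A / C₀) ^ γ⁻¹) ^ γ :=
                  Real.rpow_le_rpow ht₀pos.le (min_le_right _ _) hγ0.le
              _ = A / C₀ := Real.rpow_inv_rpow (div_pos hA hC₀).le hγ0.ne'
          calc M / Real.Gamma (1 + γ) * t₀ ^ γ * mittagLeffler γ (L * t₀ ^ γ)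
              ≤ M / Real.Gamma (1 + γ) * t₀ ^ γ * mittagLeffler γ L :=
                mul_le_mul_of_nonneg_left h2 (by positivity)
            _ = C₀ * t₀ ^ γ := by rw [hC₀def]; ring
            _ ≤ C₀ * (A / C₀) := mul_le_mul_of_nonneg_left h3 hC₀.le
            _ = A := by field_simp
        exact lt_of_lt_of_le ht₀pos (le_csSup hb ht₀S)
    · exact hT
  have hT₁memS : ∀ t, 0 ≤ t → t < T₁ → t ∈ S := by
    intro t ht0 htT₁
    rw [hT₁] at htT₁
    by_cases hb : BddAbove S
    · rw [if_pos hb] at htT₁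
      have h2 : t < sSup S := lt_of_lt_of_le htT₁ (min_le_right _ _)
      obtain ⟨a, haS, hta⟩ := exists_lt_of_lt_csSup ⟨0, hS0⟩ h2
      exact hSd a haS t ht0 hta.le
    · rw [if_neg hb] at htT₁
      obtain ⟨a, haS, hta⟩ := not_bddAbove_iff.mp hb t
      exact hSd a haS t ht0 hta.le
  have hbound' : ∀ t, 0 ≤ t → t < T₁ → M * t ^ γ / Real.Gamma (1 + γ) ≤ A := by
    intro t h1 h2
    have hmem := hT₁memS t h1 h2
    rw [hS] at hmem
    obtain ⟨_, hA'⟩ := hmem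
    have hE1 : 1 ≤ mittagLeffler γ (L * t ^ γ) :=
      one_le_ml γ hγ0 _ (by positivity)
    have h4 : 0 ≤ M / Real.Gamma (1 + γ) * t ^ γ := by positivity
    calc M * t ^ γ / Real.Gamma (1 + γ)
        = (M / Real.Gamma (1 + γ) * t ^ γ) * 1 := by ring
      _ ≤ (M / Real.Gamma (1 + γ) * t ^ γ) * mittagLeffler γ (L * t ^ γ) :=
          mul_le_mul_of_nonneg_left hE1 h4
      _ ≤ A := hA'
  have hbound : ∀ t ∈ Icc (0:ℝ) T₁, M * t ^ γ / Real.Gamma (1 + γ) ≤ A := by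
    rintro t ⟨ht0, htT⟩
    rcases lt_or_eq_of_le htT with h | h
    · exact hbound' t ht0 h
    · subst h
      have hc : ContinuousAt (fun u : ℝ => M * u ^ γ / Real.Gamma (1 + γ)) t :=
        (continuousAt_const.mul (Real.continuousAt_rpow_const t γ
          (Or.inl (ne_of_gt hT₁pos)))).div_const _
      have hlim : Filter.Tendsto (fun u : ℝ => M * u ^ γ / Real.Gamma (1 + γ))
          (nhdsWithin t (Iio t)) (nhds (M * t ^ γ / Real.Gamma (1 + γ))) :=
        hc.continuousWithinAt.tendsto
      apply le_of_tendsto hlim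
      have hIoo : Ioo 0 t ∈ nhdsWithin t (Iio t) :=
        Ioo_mem_nhdsLT_of_mem ⟨hT₁pos, le_rfl⟩
      filter_upwards [hIoo] with u hu
      exact hbound' u hu.1.le hu.2
  refine ⟨hT₁pos, ?_⟩
  exact fode_exists_unique_solution hγ0 hγ1 v₀ A L M T₁ hA hL hM0 hT₁pos f
    (hfc.mono (Set.prod_mono (Icc_subset_Icc le_rfl hT₁T) subset_rfl))
    (fun t ht => hlip t (Icc_subset_Icc le_rfl hT₁T ht))
    (fun t ht => hMb t (Icc_subset_Icc le_rfl hT₁T ht))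
    hbound
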